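/- Let R be a TRS over sign(R), let Σ = {f, ♯} ∪ sign(R) with f a fresh binary symbol and ♯ a fresh constant, and let Γ be a ranked alphabet with sign(R) ⊆ Γ. Number the symbols of Γ − sign(R) from 1 to |Γ − sign(R)|, and to each g ∈ Γ − sign(R) of arity k with number l assign t_g = f(left_k, right_l), where right₀ = ♯, right_{n+1} = f(♯, right_n), left₀ = ♯, left_{n+1} = f(left_n, x_{n+1}). Let S = {g(x₁,…,x_k) → t_g : k ≥ 0, g ∈ Γ_k − sign(R)}, which is a convergent TRS, and for L ⊆ T_Γ let S(L) be the set of S-normal forms of the members of L. Then: L is finite if and only if S(L) is finite, and L is a recognizable tree language if and only if S(L) is a recognizable tree language. -/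

import Mathlib

set_option autoImplicit false

/-!
Basic framework: ranked alphabets, terms, term rewrite systems,
bottom-up tree automata, recognizability.
A ranked alphabet is modelled by a (finite) type `σ` together with an
arity function `ar : σ → ℕ`.  `Tm.var n` denotes the variable `x_{n+1}`,
so `T_Σ(X_m)` corresponds to terms all of whose variables satisfy `n < m`,
and ground terms (`T_Σ`) are terms satisfying `Tm.Ground`.
-/

/-- Terms over the ranked alphabet `(σ, ar)` with variables `x₁, x₂, …`
(`var n` is `x_{n+1}`). -/
inductive Tm (σ : Type) (ar : σ → ℕ) : Type
  | var : ℕ → Tm σ ar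
  | app : (f : σ) → (Fin (ar f) → Tm σ ar) → Tm σ ar

namespace Tm

variable {σ γ : Type} {ar : σ → ℕ} {arγ : γ → ℕ}

/-- Application of a substitution `θ` (assigning a term to each variable). -/
def subst (θ : ℕ → Tm σ ar) : Tm σ ar → Tm σ ar
  | var n => θ n
  | app f ts => app f fun i => (ts i).subst θ

/-- A term is ground if it contains no variables. -/
def Ground : Tm σ ar → Prop
  | var _ => False
  | app _ ts => ∀ i, (ts i).Ground

/-- The set of (indices of) variables occurring in a term. -/
def vars : Tm σ ar → Set ℕ
  | var n => {n}
  | app _ ts => ⋃ i, (ts i).vars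

/-- Number of occurrences of the variable `x_{n+1}` in a term. -/
def count (n : ℕ) : Tm σ ar → ℕ
  | var m => if m = n then 1 else 0
  | app _ ts => ∑ i, (ts i).count n

/-- A term is linear if every variable occurs at most once in it. -/
def Linear (t : Tm σ ar) : Prop := ∀ n, t.count n ≤ 1

/-- The symbol `s` occurs in the term. -/
def symOccurs (s : σ) : Tm σ ar → Prop
  | var _ => False
  | app f ts => f = s ∨ ∃ i, (ts i).symOccurs s

/-- Height of a term (constants and variables have height 0). -/
def height : Tm σ ar → ℕ
  | var _ => 0
  | app _ ts => Finset.univ.sup fun i => (ts i).height + 1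

/-- Renaming of the alphabet along an arity-preserving map. -/
def map (ι : σ → γ) (h : ∀ s, arγ (ι s) = ar s) : Tm σ ar → Tm γ arγ
  | var n => var n
  | app f ts => app (ι f) fun i => (ts (Fin.cast (h f) i)).map ι h

/-- The subterm of `t` at a position (a list of argument indices), if defined. -/
def subAt : Tm σ ar → List ℕ → Option (Tm σ ar)
  | t, [] => some t
  | var _, _ :: _ => none
  | app f ts, i :: p => if h : i < ar f then (ts ⟨i, h⟩).subAt p else none

/-- Subterm relation. -/
inductive Subtm : Tm σ ar → Tm σ ar → Prop
  | refl (t : Tm σ ar) : Subtm t t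
  | app {s : Tm σ ar} {f : σ} {ts : Fin (ar f) → Tm σ ar} (i : Fin (ar f)) :
      Subtm s (ts i) → Subtm s (Tm.app f ts)

end Tm

section Rewriting

variable {σ γ : Type} {ar : σ → ℕ} {arγ : γ → ℕ}

/-- One-step rewriting by the rule set `R`: apply a rule under a substitution
at the root, or rewrite inside one argument. -/
inductive Step (R : Set (Tm σ ar × Tm σ ar)) : Tm σ ar → Tm σ ar → Prop
  | rule {l r : Tm σ ar} (θ : ℕ → Tm σ ar) (h : (l, r) ∈ R) :
      Step R (l.subst θ) (r.subst θ)
  | congr {f : σ} {ts : Fin (ar f) → Tm σ ar} {t' : Tm σ ar} (i : Fin (ar f)) :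
      Step R (ts i) t' → Step R (Tm.app f ts) (Tm.app f (Function.update ts i t'))

/-- Many-step rewriting: reflexive-transitive closure of `Step`. -/
def Steps (R : Set (Tm σ ar × Tm σ ar)) : Tm σ ar → Tm σ ar → Prop :=
  Relation.ReflTransGen (Step R)

/-- `R` is a term rewrite system: finitely many rules, and every variable of a
right-hand side occurs in the corresponding left-hand side. -/
def IsTRS (R : Set (Tm σ ar × Tm σ ar)) : Prop :=
  R.Finite ∧ ∀ lr ∈ R, lr.2.vars ⊆ lr.1.vars

/-- The set `R*(L)` of descendants of members of `L`. -/
def Desc (R : Set (Tm σ ar × Tm σ ar)) (L : Set (Tm σ ar)) : Set (Tm σ ar) :=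
  {p | ∃ q ∈ L, Steps R q p}

/-- `R` is terminating: there is no infinite reduction sequence. -/
def Terminating (R : Set (Tm σ ar × Tm σ ar)) : Prop :=
  ¬ ∃ f : ℕ → Tm σ ar, ∀ n, Step R (f n) (f (n + 1))

/-- `R` is confluent. -/
def Confluent (R : Set (Tm σ ar × Tm σ ar)) : Prop :=
  ∀ a b c, Steps R a b → Steps R a c → ∃ d, Steps R b d ∧ Steps R c d

/-- `u` is an `R`-normal form of `t`. -/
def NormalFormOf (R : Set (Tm σ ar × Tm σ ar)) (t u : Tm σ ar) : Prop :=
  Steps R t u ∧ ¬ ∃ v, Step R u v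

/-- The term is a variable. -/
def IsVarTm (t : Tm σ ar) : Prop := ∃ n, t = Tm.var n

/-- Every left-hand side is linear. -/
def LeftLinearTRS (R : Set (Tm σ ar × Tm σ ar)) : Prop :=
  ∀ lr ∈ R, lr.1.Linear

/-- All left- and right-hand sides are linear. -/
def LinearTRS (R : Set (Tm σ ar × Tm σ ar)) : Prop :=
  ∀ lr ∈ R, lr.1.Linear ∧ lr.2.Linear

/-- No rule has a variable as left-hand side or as right-hand side. -/
def CollapseFree (R : Set (Tm σ ar × Tm σ ar)) : Prop :=
  ∀ lr ∈ R, ¬ IsVarTm lr.1 ∧ ¬ IsVarTm lr.2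

/-- Transport of a rule set along an arity-preserving renaming of the alphabet. -/
def mapRules (ι : σ → γ) (h : ∀ s, arγ (ι s) = ar s) (R : Set (Tm σ ar × Tm σ ar)) :
    Set (Tm γ arγ × Tm γ arγ) :=
  (fun lr => (lr.1.map ι h, lr.2.map ι h)) '' R

end Rewriting

/-- A bottom-up tree automaton over `(σ, ar)` with state type `Q`:
transition rules `δ(q₁,…,qₙ) → q`, λ-rules `q → q'`, and final states. -/
structure BTA (σ : Type) (ar : σ → ℕ) (Q : Type) where
  trans : ∀ f : σ, (Fin (ar f) → Q) → Q → Prop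
  eps : Q → Q → Prop
  final : Q → Prop

namespace BTA

variable {σ : Type} {ar : σ → ℕ} {Q : Type}

/-- `t →* q`: the (ground) term `t` can be rewritten to the state `q`. -/
inductive Reach (A : BTA σ ar Q) : Tm σ ar → Q → Prop
  | app {f : σ} {ts : Fin (ar f) → Tm σ ar} {qs : Fin (ar f) → Q} {q : Q} :
      (∀ i, Reach A (ts i) (qs i)) → A.trans f qs q → Reach A (Tm.app f ts) q
  | eps {t : Tm σ ar} {q q' : Q} : Reach A t q → A.eps q q' → Reach A t q'

/-- The tree language recognized by the automaton. -/
def Lang (A : BTA σ ar Q) : Set (Tm σ ar) := {t | ∃ q, A.final q ∧ A.Reach t q}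

end BTA

/-- A tree language is recognizable if some bottom-up tree automaton with a
finite state set recognizes it. -/
def Recognizable {σ : Type} {ar : σ → ℕ} (L : Set (Tm σ ar)) : Prop :=
  ∃ (Q : Type) (_ : Finite Q) (A : BTA σ ar Q), A.Lang = L

/-- `R` (a TRS over all of `σ`, thought of as `sign(R)`) preserves
recognizability of finite tree languages: for every ranked alphabet extending
`σ` (i.e. every finite type with an arity-preserving injection from `σ`) and
every finite tree language of ground terms, the descendant set is recognizable. -/
def PRF {σ : Type} {ar : σ → ℕ} (R : Set (Tm σ ar × Tm σ ar)) : Prop :=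
  ∀ (γ : Type) (arγ : γ → ℕ), Finite γ →
    ∀ ι : σ → γ, Function.Injective ι →
      ∀ h : ∀ s, arγ (ι s) = ar s,
        ∀ L : Set (Tm γ arγ), L.Finite → (∀ t ∈ L, t.Ground) →
          Recognizable (Desc (mapRules ι h R) L)

/-- `R` preserves recognizability: as `PRF`, but for arbitrary recognizable
tree languages. -/
def PR {σ : Type} {ar : σ → ℕ} (R : Set (Tm σ ar × Tm σ ar)) : Prop :=
  ∀ (γ : Type) (arγ : γ → ℕ), Finite γ →
    ∀ ι : σ → γ, Function.Injective ι →
      ∀ h : ∀ s, arγ (ι s) = ar s,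
        ∀ L : Set (Tm γ arγ), Recognizable L →
          Recognizable (Desc (mapRules ι h R) L)

/-! ### Extending an alphabet by a fresh binary symbol `f` and a fresh
constant `♯`: the alphabet `γ ⊕ Bool`, where `Sum.inr true` is `f` (arity 2)
and `Sum.inr false` is `♯` (arity 0). -/

/-- Arity function of `Σ = {f, ♯} ∪ Γ`. -/
def arExt {γ : Type} (arγ : γ → ℕ) : γ ⊕ Bool → ℕ :=
  Sum.elim arγ fun b => cond b 2 0

/-! ### The comb construction (used in Statements 9 and 10).
`Γ` is a ranked alphabet containing `sign(R)` (via the injection `ι`), and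
`Γ ∪ {f, ♯}` is modelled by `γ ⊕ Bool` with `arExt`. -/

section Comb

variable {γ : Type} {arγ : γ → ℕ}

/-- the fresh constant `♯` -/
def shE : Tm (γ ⊕ Bool) (arExt arγ) := .app (Sum.inr false) ![]

/-- `f(a, b)` for the fresh binary symbol `f` -/
def fE (a b : Tm (γ ⊕ Bool) (arExt arγ)) : Tm (γ ⊕ Bool) (arExt arγ) :=
  .app (Sum.inr true) ![a, b]

/-- the right combs: `right₀ = ♯`, `right_{n+1} = f(♯, right_n)` -/
def rightCombE : ℕ → Tm (γ ⊕ Bool) (arExt arγ)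
  | 0 => shE
  | n + 1 => fE shE (rightCombE n)

/-- the left combs: `left₀ = ♯`, `left_{n+1} = f(left_n, x_{n+1})`
(recall `Tm.var n` is the variable `x_{n+1}`) -/
def leftCombE : ℕ → Tm (γ ⊕ Bool) (arExt arγ)
  | 0 => shE
  | n + 1 => fE (leftCombE n) (.var n)

/-- The TRS `S = { g(x₁,…,x_k) → t_g : g ∈ Γ − sign(R) of arity k }`,
where `t_g = f(left_k, right_{num g})`. -/
def combTRS (ι : γ → Prop) (num : γ → ℕ) :
    Set (Tm (γ ⊕ Bool) (arExt arγ) × Tm (γ ⊕ Bool) (arExt arγ)) :=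
  {p | ∃ g : γ, ¬ ι g ∧
    p = (Tm.app (Sum.inl g) fun i => Tm.var (i : Fin (arγ g)).1,
         fE (leftCombE (arγ g)) (rightCombE (num g)))}

end Comb


/-! ### Auxiliary development for Statement 10 -/

section CombAux1

variable {γ : Type} {arγ : γ → ℕ}

theorem vec2_eta {α : Type*} (v : Fin 2 → α) : v = ![v 0, v 1] := by
  funext i; fin_cases i <;> rfl

theorem shE_subst (θ : ℕ → Tm (γ ⊕ Bool) (arExt arγ)) : (shE (arγ := arγ)).subst θ = shE := by
  show Tm.app _ _ = Tm.app _ _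
  congr 1
  funext i
  exact i.elim0

theorem fE_subst (a b : Tm (γ ⊕ Bool) (arExt arγ)) (θ : ℕ → Tm (γ ⊕ Bool) (arExt arγ)) :
    (fE a b).subst θ = fE (a.subst θ) (b.subst θ) := by
  show Tm.app _ _ = Tm.app _ _
  congr 1
  funext i
  fin_cases i <;> rfl

theorem rC_subst (n : ℕ) (θ : ℕ → Tm (γ ⊕ Bool) (arExt arγ)) :
    (rightCombE (arγ := arγ) n).subst θ = rightCombE n := by
  induction n with
  | zero => exact shE_subst θ
  | succ n ih => rw [rightCombE, fE_subst, shE_subst, ih]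

theorem lC_succ_subst (n : ℕ) (θ : ℕ → Tm (γ ⊕ Bool) (arExt arγ)) :
    (leftCombE (arγ := arγ) (n + 1)).subst θ = fE ((leftCombE n).subst θ) (θ n) := by
  rw [leftCombE, fE_subst]; rfl

theorem lC_subst_congr {n : ℕ} {θ θ' : ℕ → Tm (γ ⊕ Bool) (arExt arγ)}
    (h : ∀ m < n, θ m = θ' m) :
    (leftCombE (arγ := arγ) n).subst θ = (leftCombE n).subst θ' := by
  induction n with
  | zero => rw [leftCombE, shE_subst, shE_subst]
  | succ n ih =>
      rw [lC_succ_subst, lC_succ_subst, h n (by omega),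
        ih fun m hm => h m (by omega)]

open Classical in
/-- Full normalization w.r.t. the comb TRS. -/
noncomputable def normE (P : γ → Prop) (num : γ → ℕ) :
    Tm (γ ⊕ Bool) (arExt arγ) → Tm (γ ⊕ Bool) (arExt arγ)
  | .var n => .var n
  | .app (Sum.inr b) ts => .app (Sum.inr b) fun i => normE P num (ts i)
  | .app (Sum.inl g) ts =>
      if P g then .app (Sum.inl g) fun i => normE P num (ts i)
      else (fE (leftCombE (arγ g)) (rightCombE (num g))).subst
             fun n => if h : n < arγ g then normE P num (ts ⟨n, h⟩) else shE

variable {P : γ → Prop} {num : γ → ℕ}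

theorem normE_var (n : ℕ) : normE (arγ := arγ) P num (.var n) = .var n := by
  rw [normE]

theorem normE_inr (b : Bool) (ts) :
    normE (arγ := arγ) P num (.app (Sum.inr b) ts) = .app (Sum.inr b) fun i => normE P num (ts i) := by
  rw [normE]

theorem normE_inl_pos {g : γ} (hP : P g) (ts) :
    normE (arγ := arγ) P num (.app (Sum.inl g) ts) = .app (Sum.inl g) fun i => normE P num (ts i) := by
  rw [normE, if_pos hP]

theorem normE_inl_neg {g : γ} (hP : ¬ P g) (ts) :
    normE (arγ := arγ) P num (.app (Sum.inl g) ts) =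
      fE ((leftCombE (arγ g)).subst
            fun n => if h : n < arγ g then normE P num (ts ⟨n, h⟩) else shE)
         (rightCombE (num g)) := by
  rw [normE, if_neg hP, fE_subst, rC_subst]

end CombAux1

section CombAux2

variable {γ : Type} {arγ : γ → ℕ} {P : γ → Prop} {num : γ → ℕ}

theorem normE_shE : normE P num (shE (arγ := arγ)) = shE := by
  refine (normE_inr false _).trans ?_
  congr 1; funext i; exact i.elim0

theorem normE_fE (a b : Tm (γ ⊕ Bool) (arExt arγ)) :
    normE P num (fE a b) = fE (normE P num a) (normE P num b) := by
  refine (normE_inr true _).trans ?_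
  congr 1; funext i; fin_cases i <;> rfl

theorem normE_lC_subst (n : ℕ) (θ : ℕ → Tm (γ ⊕ Bool) (arExt arγ)) :
    normE P num ((leftCombE n).subst θ) = (leftCombE n).subst fun m => normE P num (θ m) := by
  induction n with
  | zero => rw [leftCombE, shE_subst, shE_subst, normE_shE]
  | succ n ih => rw [lC_succ_subst, lC_succ_subst, normE_fE, ih]

theorem normE_rC (n : ℕ) : normE (arγ := arγ) P num (rightCombE n) = rightCombE n := by
  induction n with
  | zero => exact normE_shE
  | succ n ih => rw [rightCombE, normE_fE, normE_shE, ih]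

theorem normE_app_congr {c : γ ⊕ Bool} {ts ts' : Fin (arExt arγ c) → Tm (γ ⊕ Bool) (arExt arγ)}
    (h : ∀ i, normE P num (ts i) = normE P num (ts' i)) :
    normE P num (.app c ts) = normE P num (.app c ts') := by
  cases c with
  | inr b => rw [normE_inr, normE_inr]; congr 1; funext i; exact h i
  | inl g =>
      by_cases hP : P g
      · rw [normE_inl_pos hP, normE_inl_pos hP]; congr 1; funext i; exact h i
      · rw [normE_inl_neg hP, normE_inl_neg hP]
        congr 1
        apply lC_subst_congr
        intro m hm
        rw [dif_pos hm, dif_pos hm, h]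

theorem step_normE {u v : Tm (γ ⊕ Bool) (arExt arγ)}
    (h : Step (combTRS P num) u v) : normE P num u = normE P num v := by
  induction h with
  | rule θ hmem =>
      obtain ⟨g, hg, hp⟩ := hmem
      injection hp with h1 h2
      subst h1; subst h2
      show normE P num (Tm.app (Sum.inl g) _) = _
      rw [normE_inl_neg hg, fE_subst, rC_subst, normE_fE, normE_rC, normE_lC_subst]
      congr 1
      apply lC_subst_congr
      intro m hm
      rw [dif_pos hm]
      rfl
  | congr i hstep ih =>
      apply normE_app_congr
      intro j
      by_cases hj : j = i
      · subst hj; rw [Function.update_self]; exact ih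
      · rw [Function.update_of_ne hj]

theorem steps_normE_eq {u v : Tm (γ ⊕ Bool) (arExt arγ)}
    (h : Steps (combTRS P num) u v) : normE P num u = normE P num v := by
  induction h with
  | refl => rfl
  | tail _ hs ih => exact ih.trans (step_normE hs)

/-- Lifting a many-step reduction of one argument. -/
theorem steps_lift {σ : Type} {ar : σ → ℕ} {R : Set (Tm σ ar × Tm σ ar)} {c : σ}
    {x b : Tm σ ar} (h : Steps R x b) :
    ∀ (ts : Fin (ar c) → Tm σ ar) (i : Fin (ar c)), ts i = x →
      Steps R (.app c ts) (.app c (Function.update ts i b)) := by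
  induction h with
  | refl =>
      intro ts i hx
      subst hx
      rw [Function.update_eq_self]
      exact Relation.ReflTransGen.refl
  | tail _ hs ih =>
      intro ts i hx
      refine (ih ts i hx).tail ?_
      have hstep := Step.congr (ts := Function.update ts i _) (t' := _) i
        (by rw [Function.update_self]; exact hs)
      rwa [Function.update_idem] at hstep

theorem steps_congr {σ : Type} {ar : σ → ℕ} {R : Set (Tm σ ar × Tm σ ar)} {c : σ}
    {ts ts' : Fin (ar c) → Tm σ ar} (h : ∀ i, Steps R (ts i) (ts' i)) :
    Steps R (.app c ts) (.app c ts') := by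
  have key : ∀ s : Finset (Fin (ar c)),
      Steps R (.app c ts) (.app c fun i => if i ∈ s then ts' i else ts i) := by
    intro s
    induction s using Finset.induction_on with
    | empty =>
        have e : (fun i => if i ∈ (∅ : Finset (Fin (ar c))) then ts' i else ts i) = ts := by
          funext i; simp
        rw [e]
        exact Relation.ReflTransGen.refl
    | @insert j s hj ih =>
        have hstep := steps_lift (h j) (fun i => if i ∈ s then ts' i else ts i) j (by simp [hj])
        have e : Function.update (fun i => if i ∈ s then ts' i else ts i) j (ts' j)
            = fun i => if i ∈ insert j s then ts' i else ts i := by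
          funext i
          by_cases hij : i = j
          · subst hij; simp
          · simp [Function.update_of_ne hij, hij]
        rw [e] at hstep
        exact ih.trans hstep
  have := key Finset.univ
  have e : (fun i => if i ∈ (Finset.univ : Finset (Fin (ar c))) then ts' i else ts i) = ts' := by
    funext i; simp
  rwa [e] at this

theorem steps_to_normE (u : Tm (γ ⊕ Bool) (arExt arγ)) :
    Steps (combTRS P num) u (normE P num u) := by
  induction u with
  | var n => rw [normE_var]; exact Relation.ReflTransGen.refl
  | app c ts ih =>
      have h1 : Steps (combTRS P num) (.app c ts) (.app c fun i => normE P num (ts i)) :=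
        steps_congr ih
      cases c with
      | inr b => rw [normE_inr]; exact h1
      | inl g =>
          by_cases hP : P g
          · rw [normE_inl_pos hP]; exact h1
          · refine h1.tail ?_
            have hrule : (Tm.app (Sum.inl g) fun i => Tm.var (i : Fin (arγ g)).1,
                fE (leftCombE (arγ g)) (rightCombE (num g))) ∈ combTRS (arγ := arγ) P num :=
              ⟨g, hP, rfl⟩
            have hstep := Step.rule
              (θ := fun n => if h : n < arγ g then normE P num (ts ⟨n, h⟩) else shE) hrule
            have e1 : (Tm.app (Sum.inl g) fun i => Tm.var (i : Fin (arγ g)).1).subst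
                (fun n => if h : n < arγ g then normE P num (ts ⟨n, h⟩) else shE)
                = Tm.app (Sum.inl g) fun i => normE P num (ts i) := by
              show Tm.app _ _ = Tm.app _ _
              congr 1
              funext i
              show dite _ _ _ = _
              rw [dif_pos (show (i : ℕ) < arγ _ from i.2)]
            have e2 : (fE (leftCombE (arγ g)) (rightCombE (num g))).subst
                (fun n => if h : n < arγ g then normE P num (ts ⟨n, h⟩) else shE)
                = normE P num (.app (Sum.inl g) ts) := by
              rw [normE_inl_neg hP, fE_subst, rC_subst]
            rw [e1, e2] at hstep
            exact hstep

/-- no symbol outside `P` (on the left component) occurs -/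
def GoodE (P : γ → Prop) : Tm (γ ⊕ Bool) (arExt arγ) → Prop
  | .var _ => True
  | .app (Sum.inl g) ts => P g ∧ ∀ i, GoodE P (ts i)
  | .app (Sum.inr _) ts => ∀ i, GoodE P (ts i)

theorem good_shE : GoodE (arγ := arγ) P shE := fun i => i.elim0

theorem good_fE {a b : Tm (γ ⊕ Bool) (arExt arγ)} (ha : GoodE P a) (hb : GoodE P b) :
    GoodE P (fE a b) := by
  intro i
  fin_cases i
  · exact ha
  · exact hb

theorem good_rC (n : ℕ) : GoodE (arγ := arγ) P (rightCombE n) := by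
  induction n with
  | zero => exact good_shE
  | succ n ih => exact good_fE good_shE ih

theorem good_lC_subst {θ : ℕ → Tm (γ ⊕ Bool) (arExt arγ)} (hθ : ∀ m, GoodE P (θ m)) (n : ℕ) :
    GoodE P ((leftCombE n).subst θ) := by
  induction n with
  | zero => rw [leftCombE, shE_subst]; exact good_shE
  | succ n ih => rw [lC_succ_subst]; exact good_fE ih (hθ n)

theorem good_not_step {u v : Tm (γ ⊕ Bool) (arExt arγ)} (hu : GoodE P u)
    (h : Step (combTRS P num) u v) : False := by
  induction h with
  | rule θ hmem =>
      obtain ⟨g, hg, hp⟩ := hmem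
      injection hp with h1 h2
      subst h1
      exact hg hu.1
  | congr i hstep ih =>
      rename_i c ts t'
      cases c with
      | inl g => exact ih (hu.2 i)
      | inr b => exact ih (hu i)

theorem good_normE (u : Tm (γ ⊕ Bool) (arExt arγ)) : GoodE P (normE P num u) := by
  induction u with
  | var n => rw [normE_var]; trivial
  | app c ts ih =>
      cases c with
      | inr b => rw [normE_inr]; exact fun i => ih i
      | inl g =>
          by_cases hP : P g
          · rw [normE_inl_pos hP]; exact ⟨hP, fun i => ih i⟩
          · rw [normE_inl_neg hP]
            refine good_fE (good_lC_subst ?_ _) (good_rC _)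
            intro m
            by_cases hm : m < arγ g
            · rw [dif_pos hm]; exact ih _
            · rw [dif_neg hm]; exact good_shE

theorem irred_eq_normE (u : Tm (γ ⊕ Bool) (arExt arγ))
    (h : ¬ ∃ v, Step (combTRS P num) u v) : normE P num u = u := by
  induction u with
  | var n => exact normE_var n
  | app c ts ih =>
      have hts : ∀ i, normE P num (ts i) = ts i := by
        intro i
        refine ih i ?_
        rintro ⟨v, hv⟩
        exact h ⟨_, Step.congr i hv⟩
      cases c with
      | inr b => rw [normE_inr]; congr 1; funext i; exact hts i
      | inl g =>
          by_cases hP : P g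
          · rw [normE_inl_pos hP]; congr 1; funext i; exact hts i
          · exfalso
            have hrule : (Tm.app (Sum.inl g) fun i => Tm.var (i : Fin (arγ g)).1,
                fE (leftCombE (arγ g)) (rightCombE (num g))) ∈ combTRS (arγ := arγ) P num :=
              ⟨g, hP, rfl⟩
            have hstep := Step.rule
              (θ := fun n => if hn : n < arγ g then ts ⟨n, hn⟩ else shE) hrule
            have e1 : (Tm.app (Sum.inl g) fun i => Tm.var (i : Fin (arγ g)).1).subst
                (fun n => if hn : n < arγ g then ts ⟨n, hn⟩ else shE)
                = Tm.app (Sum.inl g) ts := by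
              show Tm.app _ _ = Tm.app _ _
              congr 1
              funext i
              show dite _ _ _ = _
              rw [dif_pos (show (i : ℕ) < arγ _ from i.2)]
            rw [e1] at hstep
            exact h ⟨_, hstep⟩

theorem nf_unique {w u : Tm (γ ⊕ Bool) (arExt arγ)}
    (h : NormalFormOf (combTRS P num) w u) : u = normE P num w := by
  obtain ⟨hsteps, hirr⟩ := h
  rw [← irred_eq_normE u hirr, steps_normE_eq hsteps]

theorem nf_exists (w : Tm (γ ⊕ Bool) (arExt arγ)) :
    NormalFormOf (combTRS P num) w (normE P num w) :=
  ⟨steps_to_normE w, fun ⟨_, hv⟩ => good_not_step (good_normE w) hv⟩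

end CombAux2

section CombAux3

variable {γ : Type} {arγ : γ → ℕ} {P : γ → Prop} {num : γ → ℕ}

/-- The normal form of (the embedding of) a `Γ`-term. -/
noncomputable def NfT (P : γ → Prop) (num : γ → ℕ) (t : Tm γ arγ) :
    Tm (γ ⊕ Bool) (arExt arγ) :=
  normE P num (t.map Sum.inl fun _ => rfl)

theorem NfT_var (n : ℕ) : NfT (arγ := arγ) P num (.var n) = .var n := by
  rw [NfT]; erw [Tm.map.eq_1]; rw [normE_var]

theorem NfT_app_pos {g : γ} (hP : P g) (ts : Fin (arγ g) → Tm γ arγ) :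
    NfT P num (.app g ts) = .app (Sum.inl g) fun i => NfT P num (ts i) := by
  rw [NfT]; erw [Tm.map.eq_2]; rw [normE_inl_pos hP]
  rfl

theorem NfT_app_neg {g : γ} (hP : ¬ P g) (ts : Fin (arγ g) → Tm γ arγ) :
    NfT P num (.app g ts) =
      fE ((leftCombE (arγ g)).subst
            fun n => if h : n < arγ g then NfT P num (ts ⟨n, h⟩) else shE)
         (rightCombE (num g)) := by
  rw [NfT]; erw [Tm.map.eq_2]; rw [normE_inl_neg hP]
  rfl

theorem NfT_is_app (g : γ) (ts : Fin (arγ g) → Tm γ arγ) :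
    ∃ c ss, NfT P num (.app g ts) = Tm.app c ss := by
  by_cases hP : P g
  · exact ⟨_, _, NfT_app_pos hP ts⟩
  · exact ⟨_, _, NfT_app_neg hP ts⟩

theorem fE_inj {a b a' b' : Tm (γ ⊕ Bool) (arExt arγ)} (h : fE a b = fE a' b') :
    a = a' ∧ b = b' := by
  injection h with h1 h2
  exact ⟨congrFun h2 0, congrFun h2 1⟩

theorem shE_ne_fE {a b : Tm (γ ⊕ Bool) (arExt arγ)} (h : shE = fE a b) : False := by
  injection h with h1 h2
  simp at h1

theorem rC_inj {m n : ℕ} (h : rightCombE (arγ := arγ) m = rightCombE n) : m = n := by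
  induction m generalizing n with
  | zero =>
      cases n with
      | zero => rfl
      | succ n =>
          rw [rightCombE, rightCombE] at h
          exact (shE_ne_fE h).elim
  | succ m ih =>
      cases n with
      | zero =>
          rw [rightCombE, rightCombE] at h
          exact (shE_ne_fE h.symm).elim
      | succ n => rw [rightCombE, rightCombE] at h; rw [ih (fE_inj h).2]

theorem lC_subst_inj {n : ℕ} {θ θ' : ℕ → Tm (γ ⊕ Bool) (arExt arγ)}
    (h : (leftCombE n).subst θ = (leftCombE n).subst θ') : ∀ m < n, θ m = θ' m := by
  induction n with
  | zero => intro m hm; omega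
  | succ n ih =>
      rw [lC_succ_subst, lC_succ_subst] at h
      obtain ⟨h1, h2⟩ := fE_inj h
      intro m hm
      rcases Nat.lt_succ_iff_lt_or_eq.mp hm with hm' | rfl
      · exact ih h1 m hm'
      · exact h2

theorem NfT_inj (hninj : ∀ a b, ¬ P a → ¬ P b → num a = num b → a = b) :
    Function.Injective (NfT (arγ := arγ) P num) := by
  intro t
  induction t with
  | var n =>
      intro u h
      cases u with
      | var m => rw [NfT_var, NfT_var] at h; injection h with h1; rw [h1]
      | app g ts =>
          exfalso
          obtain ⟨c, ss, hcs⟩ := NfT_is_app (P := P) (num := num) g ts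
          rw [NfT_var, hcs] at h
          cases h
  | app g ts ih =>
      intro u h
      cases u with
      | var m =>
          exfalso
          obtain ⟨c, ss, hcs⟩ := NfT_is_app (P := P) (num := num) g ts
          rw [NfT_var, hcs] at h
          cases h
      | app g' ts' =>
          by_cases hP : P g <;> by_cases hP' : P g'
          · rw [NfT_app_pos hP, NfT_app_pos hP'] at h
            injection h with h1 h2
            injection h1 with h1
            subst h1
            have h2' := eq_of_heq h2
            congr 1
            funext i
            exact ih i (congrFun h2' i)
          · rw [NfT_app_pos hP, NfT_app_neg hP'] at h
            injection h with h1 h2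
            simp at h1
          · rw [NfT_app_neg hP, NfT_app_pos hP'] at h
            injection h with h1 h2
            simp at h1
          · rw [NfT_app_neg hP, NfT_app_neg hP'] at h
            obtain ⟨h1, h2⟩ := fE_inj h
            have hgg : g = g' := hninj g g' hP hP' (rC_inj h2)
            subst hgg
            congr 1
            funext i
            have := lC_subst_inj h1 i.1 i.2
            rw [dif_pos i.2, dif_pos i.2] at this
            exact ih _ this
end CombAux3

section BTAAux

variable {σ : Type} {ar : σ → ℕ} {Q : Type}

/-- reflexive-transitive closure of the λ-rules -/
def EpsS (A : BTA σ ar Q) : Q → Q → Prop := Relation.ReflTransGen A.eps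

theorem reach_epsS {A : BTA σ ar Q} {u : Tm σ ar} {q q' : Q}
    (h : A.Reach u q) (he : EpsS A q q') : A.Reach u q' := by
  induction he with
  | refl => exact h
  | tail _ hs ih => exact ih.eps hs

theorem reach_not_var {A : BTA σ ar Q} {n : ℕ} {q : Q} (h : A.Reach (.var n) q) : False := by
  suffices H : ∀ u q, A.Reach u q → ∀ m, u ≠ Tm.var m from H _ _ h n rfl
  intro u q h
  induction h with
  | app _ _ => intro m hm; cases hm
  | eps _ _ ih => exact ih

theorem reach_app_inv {A : BTA σ ar Q} {f : σ} {ts : Fin (ar f) → Tm σ ar} {q : Q}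
    (h : A.Reach (.app f ts) q) :
    ∃ (qs : Fin (ar f) → Q) (q₀ : Q),
      (∀ i, A.Reach (ts i) (qs i)) ∧ A.trans f qs q₀ ∧ EpsS A q₀ q := by
  suffices H : ∀ u q, A.Reach u q → ∀ (f : σ) (ts : Fin (ar f) → Tm σ ar), u = .app f ts →
      ∃ (qs : Fin (ar f) → Q) (q₀ : Q),
        (∀ i, A.Reach (ts i) (qs i)) ∧ A.trans f qs q₀ ∧ EpsS A q₀ q from
    H _ _ h f ts rfl
  intro u q h
  induction h with
  | @app f' ts' qs' q' hr htr =>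
      intro f ts he
      injection he with h1 h2
      subst h1
      have h2' := eq_of_heq h2
      subst h2'
      exact ⟨qs', q', hr, htr, Relation.ReflTransGen.refl⟩
  | @eps t q q' hr he ih =>
      intro f ts hu
      obtain ⟨qs, q₀, h1, h2, h3⟩ := ih f ts hu
      exact ⟨qs, q₀, h1, h2, h3.tail he⟩

end BTAAux

section Pullback

variable {γ : Type} {arγ : γ → ℕ} {Qb : Type}

/-- states reached by partial left combs, `qs` giving the states of the leaves -/
def lstep (B : BTA (γ ⊕ Bool) (arExt arγ) Qb) (qs : ℕ → Qb) : ℕ → Qb → Prop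
  | 0, p => B.Reach shE p
  | n + 1, p => ∃ a m, lstep B qs n a ∧ B.trans (Sum.inr true) ![a, qs n] m ∧ EpsS B m p

theorem lstep_congr {B : BTA (γ ⊕ Bool) (arExt arγ) Qb} {qs qs' : ℕ → Qb} {n : ℕ} {p : Qb}
    (h : ∀ m < n, qs m = qs' m) (hl : lstep B qs n p) : lstep B qs' n p := by
  induction n generalizing p with
  | zero => exact hl
  | succ n ih =>
      obtain ⟨a, m, h1, h2, h3⟩ := hl
      exact ⟨a, m, ih (fun m hm => h m (by omega)) h1, h n (by omega) ▸ h2, h3⟩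

theorem reach_fE_intro {B : BTA (γ ⊕ Bool) (arExt arγ) Qb}
    {a b : Tm (γ ⊕ Bool) (arExt arγ)} {p1 p2 q₀ q : Qb}
    (ha : B.Reach a p1) (hb : B.Reach b p2)
    (htr : B.trans (Sum.inr true) ![p1, p2] q₀) (he : EpsS B q₀ q) :
    B.Reach (fE a b) q := by
  have happ : B.Reach (Tm.app (Sum.inr true) ![a, b]) q₀ := by
    refine BTA.Reach.app (A := B) (f := Sum.inr true) (qs := ![p1, p2]) ?_ htr
    intro i
    rcases i with ⟨iv, hlt⟩
    have h2 : iv < 2 := hlt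
    interval_cases iv
    · exact ha
    · exact hb
  exact reach_epsS happ he

theorem reach_fE_inv {B : BTA (γ ⊕ Bool) (arExt arγ) Qb}
    {a b : Tm (γ ⊕ Bool) (arExt arγ)} {q : Qb} (h : B.Reach (fE a b) q) :
    ∃ p1 p2 q₀, B.Reach a p1 ∧ B.Reach b p2 ∧
      B.trans (Sum.inr true) ![p1, p2] q₀ ∧ EpsS B q₀ q := by
  obtain ⟨qs, q₀, hr, htr, he⟩ := reach_app_inv (f := Sum.inr true) h
  have i0 : Fin (arExt arγ (Sum.inr true)) := ⟨0, Nat.zero_lt_two⟩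
  refine ⟨qs ⟨0, Nat.zero_lt_two⟩, qs ⟨1, Nat.one_lt_two⟩, q₀,
    hr ⟨0, Nat.zero_lt_two⟩, hr ⟨1, Nat.one_lt_two⟩, ?_, he⟩
  have e : qs = ![qs ⟨0, Nat.zero_lt_two⟩, qs ⟨1, Nat.one_lt_two⟩] := by
    funext i
    rcases i with ⟨iv, hlt⟩
    have h2 : iv < 2 := hlt
    interval_cases iv <;> rfl
  rw [← e]
  exact htr

theorem reach_lC_subst_iff {B : BTA (γ ⊕ Bool) (arExt arγ) Qb}
    {θ : ℕ → Tm (γ ⊕ Bool) (arExt arγ)} {n : ℕ} {p : Qb} :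
    B.Reach ((leftCombE n).subst θ) p ↔
      ∃ qs : ℕ → Qb, (∀ m < n, B.Reach (θ m) (qs m)) ∧ lstep B qs n p := by
  induction n generalizing p with
  | zero =>
      rw [leftCombE, shE_subst]
      constructor
      · intro h
        exact ⟨fun _ => p, fun m hm => by omega, h⟩
      · rintro ⟨qs, _, hl⟩
        exact hl
  | succ n ih =>
      rw [lC_succ_subst]
      constructor
      · intro h
        obtain ⟨p1, p2, q₀, ha, hb, htr, he⟩ := reach_fE_inv h
        obtain ⟨qs, hqs, hl⟩ := ih.mp ha
        refine ⟨fun m => if m = n then p2 else qs m, ?_, ?_⟩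
        · intro m hm
          show B.Reach (θ m) (if m = n then p2 else qs m)
          by_cases hmn : m = n
          · subst hmn; rw [if_pos rfl]; exact hb
          · rw [if_neg hmn]; exact hqs m (by omega)
        · refine ⟨p1, q₀, lstep_congr (fun m hm => by rw [if_neg (by omega)]) hl, ?_, he⟩
          show B.trans (Sum.inr true) ![p1, if n = n then p2 else qs n] q₀
          rw [if_pos rfl]
          exact htr
      · rintro ⟨qs, hqs, a, m, hl, htr, he⟩
        have hA : B.Reach ((leftCombE n).subst θ) a :=
          ih.mpr ⟨qs, fun m hm => hqs m (by omega), hl⟩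
        exact reach_fE_intro hA (hqs n (by omega)) htr he

/-- The automaton over `Γ` simulating `B` on normal forms. -/
def pullback (B : BTA (γ ⊕ Bool) (arExt arγ) Qb) (P : γ → Prop) (num : γ → ℕ) :
    BTA γ arγ Qb where
  trans g qs q :=
    (P g ∧ B.trans (Sum.inl g) qs q) ∨
    (¬ P g ∧ ∃ qsN : ℕ → Qb, (∀ i : Fin (arγ g), qsN i.1 = qs i) ∧
      ∃ a b q₀, lstep B qsN (arγ g) a ∧ B.Reach (rightCombE (num g)) b ∧
        B.trans (Sum.inr true) ![a, b] q₀ ∧ EpsS B q₀ q)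
  eps := B.eps
  final := B.final

theorem epsS_pullback {B : BTA (γ ⊕ Bool) (arExt arγ) Qb} {P : γ → Prop} {num : γ → ℕ}
    {q q' : Qb} (h : EpsS (pullback B P num) q q') : EpsS B q q' := h

theorem pullback_reach {B : BTA (γ ⊕ Bool) (arExt arγ) Qb} {P : γ → Prop} {num : γ → ℕ}
    (t : Tm γ arγ) (q : Qb) :
    (pullback B P num).Reach t q ↔ B.Reach (NfT P num t) q := by
  constructor
  · intro h
    induction h with
    | @app g ts qs q₀ hr htr ih =>
        rcases htr with ⟨hP, htr⟩ | ⟨hP, qsN, hqsN, a, b, q₀', hl, hrb, htr, he⟩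
        · rw [NfT_app_pos hP]
          exact BTA.Reach.app (fun i => ih i) htr
        · rw [NfT_app_neg hP]
          refine reach_fE_intro ?_ hrb htr he
          refine reach_lC_subst_iff.mpr ⟨qsN, ?_, hl⟩
          intro m hm
          rw [dif_pos hm]
          have e : qsN m = qs ⟨m, hm⟩ := hqsN ⟨m, hm⟩
          rw [e]
          exact ih ⟨m, hm⟩
    | eps _ he ih => exact ih.eps he
  · intro h
    induction t generalizing q with
    | var n =>
        rw [NfT_var] at h
        exact (reach_not_var h).elim
    | app g ts ih =>
        by_cases hP : P g
        · rw [NfT_app_pos hP] at h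
          obtain ⟨qs, q₀, hr, htr, he⟩ := reach_app_inv h
          have he' : EpsS (pullback B P num) q₀ q := he
          refine reach_epsS (A := pullback B P num) ?_ he'
          exact BTA.Reach.app (A := pullback B P num) (f := g) (qs := qs)
            (fun i => ih i _ (hr i)) (Or.inl ⟨hP, htr⟩)
        · rw [NfT_app_neg hP] at h
          obtain ⟨p1, p2, q₀, ha, hb, htr, he⟩ := reach_fE_inv h
          obtain ⟨qsN, hqs, hl⟩ := reach_lC_subst_iff.mp ha
          refine BTA.Reach.app (qs := fun i => qsN i.1) ?_ ?_
          · intro i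
            refine ih i _ ?_
            have := hqs i.1 i.2
            rwa [dif_pos i.2] at this
          · exact Or.inr ⟨hP, qsN, fun i => rfl, p1, p2, q₀, hl, hb, htr, he⟩

theorem pullback_lang {B : BTA (γ ⊕ Bool) (arExt arγ) Qb} {P : γ → Prop} {num : γ → ℕ} :
    (pullback B P num).Lang = NfT P num ⁻¹' B.Lang := by
  ext t
  constructor
  · rintro ⟨q, hf, hr⟩
    exact ⟨q, hf, (pullback_reach t q).mp hr⟩
  · rintro ⟨q, hf, hr⟩
    exact ⟨q, hf, (pullback_reach t q).mpr hr⟩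

end Pullback

section Forward

variable {γ : Type} {arγ : γ → ℕ} {Q : Type}

/-- snoc for tuples -/
def snocF {α : Type*} {k : ℕ} (f : Fin k → α) (a : α) : Fin (k + 1) → α :=
  fun i => if h : i.1 < k then f ⟨i.1, h⟩ else a

/-- state space of the forward automaton -/
abbrev FSt (Q : Type) (M : ℕ) : Type := Q ⊕ (Fin (M + 1) ⊕ ((k : Fin (M + 1)) × (Fin k.1 → Q)))

variable {M : ℕ}

def stQ (q : Q) : FSt Q M := Sum.inl q
def stR (n : Fin (M + 1)) : FSt Q M := Sum.inr (Sum.inl n)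
def stL (k : Fin (M + 1)) (qs : Fin k.1 → Q) : FSt Q M := Sum.inr (Sum.inr ⟨k, qs⟩)

def fi0 : Fin 2 := ⟨0, Nat.zero_lt_two⟩
def fi1 : Fin 2 := ⟨1, Nat.one_lt_two⟩

theorem vec_fi0 {α : Type*} (a b : α) : ![a, b] fi0 = a := rfl
theorem vec_fi1 {α : Type*} (a b : α) : ![a, b] fi1 = b := rfl

def fwTransL (A : BTA γ arγ Q) (P : γ → Prop) (g : γ)
    (qsb : Fin (arγ g) → FSt Q M) (q' : FSt Q M) : Prop :=
  P g ∧ ∃ qs : Fin (arγ g) → Q, (∀ i, qsb i = stQ (qs i)) ∧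
    ∃ q, q' = stQ q ∧ A.trans g qs q

def fwTransSharp (q' : FSt Q M) : Prop :=
  q' = stR ⟨0, Nat.succ_pos M⟩ ∨
  q' = stL ⟨0, Nat.succ_pos M⟩ fun i => absurd i.2 (Nat.not_lt_zero _)

def fwTransF (A : BTA γ arγ Q) (P : γ → Prop) (num : γ → ℕ)
    (qsb : Fin 2 → FSt Q M) (q' : FSt Q M) : Prop :=
  (∃ (n : ℕ) (_ : n + 1 ≤ M),
      qsb fi0 = stR ⟨0, Nat.succ_pos M⟩ ∧ qsb fi1 = stR ⟨n, by omega⟩ ∧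
      q' = stR ⟨n + 1, by omega⟩) ∨
  (∃ (k : ℕ) (_ : k + 1 ≤ M) (qs : Fin k → Q) (q : Q),
      qsb fi0 = stL ⟨k, by omega⟩ qs ∧ qsb fi1 = stQ q ∧
      q' = stL ⟨k + 1, by omega⟩ (snocF qs q)) ∨
  (∃ (g : γ) (_ : ¬ P g) (_ : arγ g ≤ M) (_ : num g ≤ M)
      (qs : Fin (arγ g) → Q) (q : Q),
      qsb fi0 = stL ⟨arγ g, by omega⟩ qs ∧ qsb fi1 = stR ⟨num g, by omega⟩ ∧
      A.trans g qs q ∧ q' = stQ q)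

/-- the forward automaton -/
def fw (A : BTA γ arγ Q) (P : γ → Prop) (num : γ → ℕ) (M : ℕ) :
    BTA (γ ⊕ Bool) (arExt arγ) (FSt Q M) where
  trans c := match c with
    | Sum.inl g => fun qsb q' => fwTransL A P g qsb q'
    | Sum.inr false => fun _ q' => fwTransSharp q'
    | Sum.inr true => fun qsb q' => fwTransF A P num qsb q'
  eps s s' := ∃ q q', s = stQ q ∧ s' = stQ q' ∧ A.eps q q'
  final s := ∃ q, s = stQ q ∧ A.final q

/-- semantics of the states of `fw` -/
def Mean (A : BTA γ arγ Q) (P : γ → Prop) (num : γ → ℕ) (M : ℕ) :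
    FSt Q M → Tm (γ ⊕ Bool) (arExt arγ) → Prop
  | Sum.inl q, u => ∃ t, u = NfT P num t ∧ A.Reach t q
  | Sum.inr (Sum.inl n), u => u = rightCombE n.1
  | Sum.inr (Sum.inr kqs), u => ∃ ts : Fin kqs.1.1 → Tm γ arγ,
      u = (leftCombE kqs.1.1).subst
            (fun m => if h : m < kqs.1.1 then NfT P num (ts ⟨m, h⟩) else shE) ∧
      ∀ i, A.Reach (ts i) (kqs.2 i)

variable {A : BTA γ arγ Q} {P : γ → Prop} {num : γ → ℕ}

theorem mean_stQ {q : Q} {u} :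
    Mean A P num M (stQ q) u ↔ ∃ t, u = NfT P num t ∧ A.Reach t q := Iff.rfl

theorem mean_stR {n : Fin (M + 1)} {u} :
    Mean A P num M (stR n) u ↔ u = rightCombE n.1 := Iff.rfl

theorem mean_stL {k : Fin (M + 1)} {qs : Fin k.1 → Q} {u} :
    Mean A P num M (stL k qs) u ↔ ∃ ts : Fin k.1 → Tm γ arγ,
      u = (leftCombE k.1).subst
            (fun m => if h : m < k.1 then NfT P num (ts ⟨m, h⟩) else shE) ∧
      ∀ i, A.Reach (ts i) (qs i) := Iff.rfl

theorem fwd_sound {u : Tm (γ ⊕ Bool) (arExt arγ)} {s : FSt Q M}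
    (h : (fw A P num M).Reach u s) : Mean A P num M s u := by
  induction h with
  | @app c ts qs s hr htr ih =>
      cases c with
      | inl g =>
          obtain ⟨hP, qsA, hqs, q, rfl, htrA⟩ := (htr : fwTransL A P g qs s)
          have ihq : ∀ i, ∃ t, ts i = NfT P num t ∧ A.Reach t (qsA i) := by
            intro i
            have := ih i
            rwa [hqs i, mean_stQ] at this
          choose tf htf hA using ihq
          refine mean_stQ.mpr ⟨Tm.app g tf, ?_, BTA.Reach.app hA htrA⟩
          erw [NfT_app_pos hP]
          congr 1
          funext i
          exact htf i
      | inr b =>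
          cases b with
          | false =>
              have hsh : Tm.app (Sum.inr false) ts = shE (arγ := arγ) := by
                show Tm.app _ _ = Tm.app _ _
                congr 1
                funext i
                exact absurd i.2 (Nat.not_lt_zero _)
              rcases (htr : fwTransSharp s) with rfl | rfl
              · rw [mean_stR, hsh]; rfl
              · rw [mean_stL]
                refine ⟨fun i => absurd i.2 (Nat.not_lt_zero _), ?_,
                  fun i => absurd i.2 (Nat.not_lt_zero _)⟩
                rw [hsh, leftCombE, shE_subst]
          | true =>
              have hfe : Tm.app (Sum.inr true) ts = fE (ts fi0) (ts fi1) := by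
                show Tm.app _ _ = Tm.app _ _
                congr 1
                funext i
                rcases i with ⟨iv, hlt⟩
                have h2 : iv < 2 := hlt
                interval_cases iv <;> rfl
              have ih0 := ih fi0
              have ih1 := ih fi1
              rcases (htr : fwTransF A P num qs s) with
                ⟨n, hn, h0, h1, rfl⟩ | ⟨k, hk, qsA, qA, h0, h1, rfl⟩ |
                ⟨g, hg, har, hnum, qsA, qA, h0, h1, htrA, rfl⟩
              · rw [h0] at ih0
                rw [h1] at ih1
                have ih0' : ts fi0 = rightCombE 0 := ih0
                have ih1' : ts fi1 = rightCombE n := ih1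
                show Tm.app (Sum.inr true) ts = rightCombE (n + 1)
                rw [hfe, ih0', ih1', rightCombE]
                rfl
              · rw [h0] at ih0
                rw [h1] at ih1
                have ih0' : ∃ tf : Fin k → Tm γ arγ,
                    ts fi0 = (leftCombE k).subst
                      (fun m => if h : m < k then NfT P num (tf ⟨m, h⟩) else shE) ∧
                    ∀ i, A.Reach (tf i) (qsA i) := ih0
                obtain ⟨tf, htf, hAf⟩ := ih0'
                obtain ⟨t1, ht1, hA1⟩ := mean_stQ.mp ih1
                show ∃ tf' : Fin (k + 1) → Tm γ arγ,
                    Tm.app (Sum.inr true) ts = (leftCombE (k + 1)).subst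
                      (fun m => if h : m < k + 1 then NfT P num (tf' ⟨m, h⟩) else shE) ∧
                    ∀ i, A.Reach (tf' i) (snocF qsA qA i)
                refine ⟨snocF tf t1, ?_, ?_⟩
                · rw [hfe, htf, ht1, lC_succ_subst]
                  congr 1
                  · apply lC_subst_congr
                    intro m hm
                    rw [dif_pos hm, dif_pos (show m < k + 1 by omega)]
                    congr 1
                    exact (dif_pos hm :
                      snocF tf t1 ⟨m, Nat.lt_succ_of_lt hm⟩ = tf ⟨m, hm⟩).symm
                  · rw [dif_pos (show k < k + 1 by omega)]
                    congr 1
                    exact (dif_neg (Nat.lt_irrefl k) :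
                      snocF tf t1 ⟨k, Nat.lt_succ_self k⟩ = t1).symm
                · intro i
                  by_cases hik : i.1 < k
                  · have e1 : snocF tf t1 i = tf ⟨i.1, hik⟩ := dif_pos hik
                    have e2 : snocF qsA qA i = qsA ⟨i.1, hik⟩ := dif_pos hik
                    rw [e1, e2]
                    exact hAf ⟨i.1, hik⟩
                  · have e1 : snocF tf t1 i = t1 := dif_neg hik
                    have e2 : snocF qsA qA i = qA := dif_neg hik
                    rw [e1, e2]
                    exact hA1
              · rw [h0] at ih0
                rw [h1] at ih1
                have ih0' : ∃ tf : Fin (arγ g) → Tm γ arγ,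
                    ts fi0 = (leftCombE (arγ g)).subst
                      (fun m => if h : m < arγ g then NfT P num (tf ⟨m, h⟩) else shE) ∧
                    ∀ i, A.Reach (tf i) (qsA i) := ih0
                have ih1' : ts fi1 = rightCombE (num g) := ih1
                obtain ⟨tf, htf, hAf⟩ := ih0'
                refine mean_stQ.mpr ⟨Tm.app g tf, ?_, BTA.Reach.app hAf htrA⟩
                rw [NfT_app_neg hg, hfe, htf, ih1']
  | eps hr he ih =>
      obtain ⟨q, q', rfl, rfl, hae⟩ := he
      obtain ⟨t, rfl, hA⟩ := mean_stQ.mp ih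
      exact mean_stQ.mpr ⟨t, rfl, hA.eps hae⟩

theorem fw_reach_shE :
    (fw A P num M).Reach (shE (arγ := arγ)) (stR ⟨0, Nat.succ_pos M⟩) := by
  refine BTA.Reach.app (A := fw A P num M) (f := Sum.inr false)
    (qs := fun i => absurd i.2 (Nat.not_lt_zero _)) ?_ ?_
  · intro i
    exact absurd i.2 (Nat.not_lt_zero _)
  · exact Or.inl rfl

theorem fw_reach_shE_L :
    (fw A P num M).Reach (shE (arγ := arγ))
      (stL ⟨0, Nat.succ_pos M⟩ fun i => absurd i.2 (Nat.not_lt_zero _)) := by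
  refine BTA.Reach.app (A := fw A P num M) (f := Sum.inr false)
    (qs := fun i => absurd i.2 (Nat.not_lt_zero _)) ?_ ?_
  · intro i
    exact absurd i.2 (Nat.not_lt_zero _)
  · exact Or.inr rfl

theorem fw_reach_rC (n : ℕ) (hn : n ≤ M) :
    (fw A P num M).Reach (rightCombE n) (stR ⟨n, by omega⟩) := by
  induction n with
  | zero => exact fw_reach_shE
  | succ n ih =>
      rw [rightCombE]
      refine reach_fE_intro fw_reach_shE (ih (by omega)) ?_ Relation.ReflTransGen.refl
      exact Or.inl ⟨n, hn, rfl, rfl, rfl⟩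

theorem fw_reach_lC (k : ℕ) (hk : k ≤ M) (tf : Fin k → Tm γ arγ) (qs : Fin k → Q)
    (h : ∀ i, (fw A P num M).Reach (NfT P num (tf i)) (stQ (qs i))) :
    (fw A P num M).Reach
      ((leftCombE k).subst fun m => if hm : m < k then NfT P num (tf ⟨m, hm⟩) else shE)
      (stL ⟨k, by omega⟩ qs) := by
  induction k with
  | zero =>
      rw [leftCombE, shE_subst]
      have e : qs = fun i => absurd i.2 (Nat.not_lt_zero _) := by
        funext i
        exact absurd i.2 (Nat.not_lt_zero _)
      rw [e]
      exact fw_reach_shE_L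
  | succ k ih =>
      rw [lC_succ_subst]
      have child0 := ih (by omega) (fun i => tf ⟨i.1, by omega⟩) (fun i => qs ⟨i.1, by omega⟩)
        (fun i => h ⟨i.1, by omega⟩)
      have e0 : ((leftCombE k).subst fun m =>
          if hm : m < k then NfT P num (tf ⟨m, by omega⟩) else shE) =
          ((leftCombE k).subst fun m =>
          if hm : m < k + 1 then NfT P num (tf ⟨m, hm⟩) else shE) := by
        apply lC_subst_congr
        intro m hm
        rw [dif_pos hm, dif_pos (show m < k + 1 by omega)]
      rw [← e0]
      have e1 : (if hm : k < k + 1 then NfT P num (tf ⟨k, hm⟩) else shE) =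
          NfT P num (tf ⟨k, by omega⟩) := by
        rw [dif_pos (show k < k + 1 by omega)]
      rw [e1]
      refine reach_fE_intro child0 (h ⟨k, by omega⟩) ?_ Relation.ReflTransGen.refl
      have esn : snocF (fun j : Fin k => qs ⟨j.1, Nat.lt_succ_of_lt j.2⟩)
          (qs ⟨k, Nat.lt_succ_self k⟩) = qs := by
        funext i
        by_cases hik : i.1 < k
        · have e1 : snocF (fun j : Fin k => qs ⟨j.1, Nat.lt_succ_of_lt j.2⟩)
              (qs ⟨k, Nat.lt_succ_self k⟩) i = qs ⟨i.1, Nat.lt_succ_of_lt hik⟩ := dif_pos hik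
          exact e1.trans (congrArg qs (Fin.ext rfl))
        · have e1 : snocF (fun j : Fin k => qs ⟨j.1, Nat.lt_succ_of_lt j.2⟩)
              (qs ⟨k, Nat.lt_succ_self k⟩) i = qs ⟨k, Nat.lt_succ_self k⟩ := dif_neg hik
          exact e1.trans (congrArg qs (Fin.ext (show k = i.1 by omega)))
      refine Or.inr (Or.inl ⟨k, hk, fun j : Fin k => qs ⟨j.1, Nat.lt_succ_of_lt j.2⟩,
        qs ⟨k, Nat.lt_succ_self k⟩, rfl, rfl, ?_⟩)
      rw [esn]

theorem fw_reach_NfT (harM : ∀ g : γ, arγ g ≤ M) (hnumM : ∀ g : γ, num g ≤ M)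
    {t : Tm γ arγ} {q : Q} (h : A.Reach t q) :
    (fw A P num M).Reach (NfT P num t) (stQ q) := by
  induction h with
  | @app g tf qsA q hr htr ih =>
      by_cases hP : P g
      · rw [NfT_app_pos hP]
        refine BTA.Reach.app (A := fw A P num M) (f := Sum.inl g)
          (qs := fun i => stQ (qsA i)) (fun i => ih i) ?_
        exact ⟨hP, qsA, fun i => rfl, q, rfl, htr⟩
      · rw [NfT_app_neg hP]
        refine reach_fE_intro (fw_reach_lC (arγ g) (harM g) tf qsA fun i => ih i)
          (fw_reach_rC (num g) (hnumM g)) ?_ Relation.ReflTransGen.refl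
        exact Or.inr (Or.inr ⟨g, hP, harM g, hnumM g, qsA, q, rfl, rfl, htr, rfl⟩)
  | eps hr hae ih =>
      exact ih.eps ⟨_, _, rfl, rfl, hae⟩

theorem fw_lang (harM : ∀ g : γ, arγ g ≤ M) (hnumM : ∀ g : γ, num g ≤ M) :
    (fw A P num M).Lang = NfT P num '' A.Lang := by
  ext u
  constructor
  · rintro ⟨s, ⟨q, rfl, hf⟩, hr⟩
    obtain ⟨t, rfl, hA⟩ := mean_stQ.mp (fwd_sound hr)
    exact ⟨t, ⟨q, hf, hA⟩, rfl⟩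
  · rintro ⟨t, ⟨q, hf, hA⟩, rfl⟩
    exact ⟨stQ q, ⟨q, rfl, hf⟩, fw_reach_NfT harM hnumM hA⟩

end Forward

/-! ### Statement 10: `L` finite iff `S(L)` finite, and `L` recognizable iff
`S(L)` recognizable, for the comb TRS `S`. -/

theorem stmt_10 {σ γ : Type} {ar : σ → ℕ} {arγ : γ → ℕ} [Finite σ] [Finite γ]
    (R : Set (Tm σ ar × Tm σ ar)) (hR : IsTRS R)
    -- `R` is a TRS over `sign(R)`: every symbol of `σ` occurs in `R`
    (hsign : ∀ s : σ, ∃ lr ∈ R, lr.1.symOccurs s ∨ lr.2.symOccurs s)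
    -- `Γ` is a ranked alphabet with `sign(R) ⊆ Γ`
    (ι : σ → γ) (hinj : Function.Injective ι) (har : ∀ s, arγ (ι s) = ar s)
    -- a numbering of the symbols of `Γ − sign(R)` from `1` to `|Γ − sign(R)|`
    (num : γ → ℕ)
    (hnum : Set.BijOn num {g : γ | g ∉ Set.range ι}
      (Set.Icc 1 (Nat.card {g : γ // g ∉ Set.range ι})))
    -- a tree language `L ⊆ T_Γ`
    (L : Set (Tm γ arγ)) (hground : ∀ t ∈ L, t.Ground) :
    -- `S(L)`: the set of `S`-normal forms of members of `L`
    (L.Finite ↔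
      {u : Tm (γ ⊕ Bool) (arExt arγ) | ∃ t ∈ L,
        NormalFormOf (combTRS (arγ := arγ) (· ∈ Set.range ι) num)
          (t.map Sum.inl fun _ => rfl) u}.Finite) ∧
    (Recognizable L ↔
      Recognizable {u : Tm (γ ⊕ Bool) (arExt arγ) | ∃ t ∈ L,
        NormalFormOf (combTRS (arγ := arγ) (· ∈ Set.range ι) num)
          (t.map Sum.inl fun _ => rfl) u}) := by
  have hninj : ∀ a b : γ, ¬ (a ∈ Set.range ι) → ¬ (b ∈ Set.range ι) →
      num a = num b → a = b := fun a b ha hb h => hnum.injOn ha hb h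
  have hset : {u : Tm (γ ⊕ Bool) (arExt arγ) | ∃ t ∈ L,
      NormalFormOf (combTRS (arγ := arγ) (· ∈ Set.range ι) num)
        (t.map Sum.inl fun _ => rfl) u} = NfT (· ∈ Set.range ι) num '' L := by
    ext u
    simp only [Set.mem_setOf_eq, Set.mem_image]
    constructor
    · rintro ⟨t, ht, hnf⟩
      exact ⟨t, ht, (nf_unique hnf).symm⟩
    · rintro ⟨t, ht, rfl⟩
      exact ⟨t, ht, nf_exists _⟩
  rw [hset]
  constructor
  · constructor
    · exact fun h => h.image _
    · intro h
      exact Set.Finite.of_finite_image h (NfT_inj hninj).injOn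
  · constructor
    · rintro ⟨Q, hQ, A, hA⟩
      haveI := hQ
      haveI := Fintype.ofFinite γ
      obtain ⟨M, harM, hnumM⟩ : ∃ M : ℕ, (∀ g : γ, arγ g ≤ M) ∧ (∀ g : γ, num g ≤ M) := by
        refine ⟨Finset.univ.sup (fun g : γ => max (arγ g) (num g)), fun g => ?_, fun g => ?_⟩
        · exact le_trans (le_max_left _ _) (Finset.le_sup (f := fun g : γ => max (arγ g) (num g)) (Finset.mem_univ g))
        · exact le_trans (le_max_right _ _) (Finset.le_sup (f := fun g : γ => max (arγ g) (num g)) (Finset.mem_univ g))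
      refine ⟨FSt Q M, inferInstance, fw A (· ∈ Set.range ι) num M, ?_⟩
      exact (fw_lang harM hnumM).trans (by rw [hA])
    · rintro ⟨Qb, hQb, B, hB⟩
      refine ⟨Qb, hQb, pullback B (· ∈ Set.range ι) num, ?_⟩
      rw [pullback_lang, hB, Set.preimage_image_eq L (NfT_inj hninj)]
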